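/- arXiv:math-ph/0509009 — 2 statements merged into one kernel-verified Lean document; each statement's English description precedes it below -/
import Mathlib

section
/- Let $h_1, h_2 : [0,\infty) \to \mathbb{R}$ be positive, continuous, bounded functions. Define $m_1(t) = \frac{1}{t}\int_0^t h_1(s)\,ds$ and $m_2(t) = \frac{1}{t}\int_0^t h_2(s)\,ds$. Assume there is $C > 0$ such that $m_1(t) \geq C$ for all sufficiently large $t$, and that $m_2(t) \to 0$ as $t \to \infty$. Then for every $\delta > 0$ there exists a sequence $t_n \to \infty$ such that $m_1(t_n) \geq \frac{1}{1+\delta} h_1(t_n)$ for all $n$ and $h_2(t_n) \to 0$ as $n \to \infty$. -/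
open MeasureTheory Filter

open Set in
set_option maxHeartbeats 1000000 in
lemma exists_good_point
    (h₁ h₂ : ℝ → ℝ)
    (hpos₁ : ∀ s, 0 ≤ s → 0 < h₁ s) (hpos₂ : ∀ s, 0 ≤ s → 0 < h₂ s)
    (hcont₁ : Continuous h₁) (hcont₂ : Continuous h₂)
    (M₁ : ℝ) (hM₁ : ∀ s, 0 ≤ s → h₁ s ≤ M₁)
    (C : ℝ) (hC : 0 < C)
    (T₀ : ℝ) (hT₀ : ∀ t, T₀ ≤ t → C ≤ (1 / t) * ∫ s in (0:ℝ)..t, h₁ s)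
    (hto0 : Tendsto (fun t => (1 / t) * ∫ s in (0:ℝ)..t, h₂ s) atTop (nhds 0))
    (δ : ℝ) (hδ : 0 < δ) (ε : ℝ) (hε : 0 < ε) (X : ℝ) :
    ∃ t, X ≤ t ∧ 1 ≤ t ∧
      t * h₁ t ≤ (1 + δ) * (∫ s in (0:ℝ)..t, h₁ s) ∧ h₂ t < ε := by
  set F : ℝ → ℝ := fun t => ∫ s in (0:ℝ)..t, h₁ s with hF
  have hδ1 : (0:ℝ) < 1 + δ := by linarith
  have hFderiv : ∀ t : ℝ, HasDerivAt F (h₁ t) t := fun t =>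
    intervalIntegral.integral_hasDerivAt_right (hcont₁.intervalIntegrable _ _)
      hcont₁.aestronglyMeasurable.stronglyMeasurableAtFilter hcont₁.continuousAt
  have hFcont : Continuous F := by
    rw [continuous_iff_continuousAt]; exact fun t => (hFderiv t).continuousAt
  -- T₁
  set T₁ : ℝ := max T₀ 1 with hT₁def
  have hT₁1 : (1:ℝ) ≤ T₁ := le_max_right _ _
  have hT₁0 : (0:ℝ) < T₁ := lt_of_lt_of_le one_pos hT₁1
  have hFlow : ∀ t, T₁ ≤ t → C * t ≤ F t := by
    intro t ht
    have ht0 : (0:ℝ) < t := lt_of_lt_of_le hT₁0 ht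
    have := hT₀ t (le_trans (le_max_left _ _) ht)
    rw [div_mul_eq_mul_div, one_mul, le_div_iff₀ ht0] at this
    linarith
  have hFpos : ∀ t, T₁ ≤ t → 0 < F t := fun t ht =>
    lt_of_lt_of_le (mul_pos hC (lt_of_lt_of_le hT₁0 ht)) (hFlow t ht)
  have hFup : ∀ t, 0 ≤ t → F t ≤ M₁ * t := by
    intro t ht
    calc F t ≤ ∫ s in (0:ℝ)..t, M₁ := by
          apply intervalIntegral.integral_mono_on ht (hcont₁.intervalIntegrable _ _)
            intervalIntegrable_const
          intro x hx; exact hM₁ x hx.1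
      _ = M₁ * t := by simp [mul_comm]
  have hCM : C ≤ M₁ := by
    have h1 := hFlow T₁ le_rfl
    have h2 := hFup T₁ hT₁0.le
    nlinarith
  have hM₁0 : 0 < M₁ := lt_of_lt_of_le hC hCM
  have hlogMC : 0 ≤ Real.log (M₁ / C) :=
    Real.log_nonneg ((one_le_div hC).2 hCM)
  -- K
  set K : ℝ := Real.exp ((1 + Real.log (M₁ / C)) / δ) with hKdef
  have hlogK : Real.log K = (1 + Real.log (M₁ / C)) / δ := Real.log_exp _
  have hK1 : 1 < K := by
    rw [hKdef]
    exact Real.one_lt_exp_iff.2 (by positivity)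
  have hK0 : (0:ℝ) < K := lt_trans one_pos hK1
  have hδK : δ * Real.log K = 1 + Real.log (M₁ / C) := by
    rw [hlogK]; field_simp
  -- choose S from hto0
  obtain ⟨S, hS⟩ := eventually_atTop.1
    (hto0.eventually (gt_mem_nhds (show 0 < ε / ((1 + δ) * K) by positivity)))
  set T : ℝ := max (max X T₁) (S / K) with hTdef
  have hTX : X ≤ T := le_trans (le_max_left _ _) (le_max_left _ _)
  have hTT₁ : T₁ ≤ T := le_trans (le_max_right _ _) (le_max_left _ _)
  have hT1 : (1:ℝ) ≤ T := le_trans hT₁1 hTT₁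
  have hT0 : (0:ℝ) < T := lt_of_lt_of_le one_pos hT1
  have hKTS : S ≤ K * T := by
    have h : S / K ≤ T := le_max_right _ _
    calc S = K * (S / K) := by field_simp
      _ ≤ K * T := by nlinarith
  have hTKT : T < K * T := by nlinarith
  have hTKT' : T ≤ K * T := hTKT.le
  have hm₂small : (1 / (K * T)) * ∫ s in (0:ℝ)..(K*T), h₂ s < ε / ((1 + δ) * K) :=
    hS _ hKTS
  have hKT0 : (0:ℝ) < K * T := by positivity
  -- by contradiction
  by_contra hcon
  push_neg at hcon
  have hgood : ∀ t ∈ Icc T (K * T), t * h₁ t ≤ (1 + δ) * F t → ε ≤ h₂ t := by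
    intro t ht hineq
    exact hcon t (le_trans hTX ht.1) (le_trans hT1 ht.1) hineq
  set Sg : Set ℝ := {t | t * h₁ t ≤ (1 + δ) * F t} with hSgdef
  have hSgmeas : MeasurableSet Sg :=
    (isClosed_le (continuous_id.mul hcont₁) (continuous_const.mul hFcont)).measurableSet
  -- Markov bound on the measure of Sg ∩ Ioc T (K*T)
  have hmarkov : ε * (volume (Sg ∩ Ioc T (K * T))).toReal ≤ ∫ s in (0:ℝ)..(K*T), h₂ s := by
    have hεmeas : MeasurableSet {x : ℝ | ε ≤ h₂ x} :=
      (isClosed_le continuous_const hcont₂).measurableSet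
    have hsub : Sg ∩ Ioc T (K * T) ⊆ {x | ε ≤ h₂ x} ∩ Ioc 0 (K * T) := by
      rintro x ⟨hxS, hxI⟩
      exact ⟨hgood x ⟨hxI.1.le, hxI.2⟩ hxS, lt_of_lt_of_le hT0 hxI.1.le, hxI.2⟩
    have hint : IntegrableOn h₂ (Ioc 0 (K * T)) volume :=
      (hcont₂.intervalIntegrable 0 (K*T)).1
    have hnn : 0 ≤ᵐ[volume.restrict (Ioc 0 (K * T))] h₂ := by
      refine (ae_restrict_iff' measurableSet_Ioc).2 (ae_of_all _ fun x hx => ?_)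
      exact (hpos₂ x hx.1.le).le
    have hmk := mul_meas_ge_le_integral_of_nonneg hnn hint ε
    rw [measureReal_def, Measure.restrict_apply hεmeas] at hmk
    have hle : volume (Sg ∩ Ioc T (K * T)) ≤ volume ({x | ε ≤ h₂ x} ∩ Ioc 0 (K * T)) :=
      measure_mono hsub
    have hfin : volume ({x | ε ≤ h₂ x} ∩ Ioc 0 (K * T)) ≠ ⊤ :=
      ne_top_of_le_ne_top measure_Ioc_lt_top.ne (measure_mono inter_subset_right)
    have htr : (volume (Sg ∩ Ioc T (K * T))).toReal
        ≤ (volume ({x | ε ≤ h₂ x} ∩ Ioc 0 (K * T))).toReal :=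
      ENNReal.toReal_le_toReal (ne_top_of_le_ne_top hfin hle) hfin |>.2 hle
    calc ε * (volume (Sg ∩ Ioc T (K * T))).toReal
        ≤ ε * (volume ({x | ε ≤ h₂ x} ∩ Ioc 0 (K * T))).toReal := by nlinarith
      _ ≤ ∫ x in Ioc 0 (K*T), h₂ x := hmk
      _ = ∫ s in (0:ℝ)..(K*T), h₂ s := (intervalIntegral.integral_of_le hKT0.le).symm
  have hvol : (volume (Sg ∩ Ioc T (K * T))).toReal < T / (1 + δ) := by
    have h2 : ∫ s in (0:ℝ)..(K*T), h₂ s < ε / ((1 + δ) * K) * (K * T) := by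
      rw [div_mul_eq_mul_div, one_mul, div_lt_iff₀ hKT0] at hm₂small
      linarith [hm₂small]
    have h3 := lt_of_le_of_lt hmarkov h2
    have hεK : ε / ((1 + δ) * K) * (K * T) = ε * (T / (1 + δ)) := by
      field_simp
    rw [hεK] at h3
    exact lt_of_mul_lt_mul_left h3 hε.le
  -- the indicator function and its integral
  set c : ℝ := (1 + δ) / T with hcdef
  have hc0 : 0 < c := by positivity
  have hIndInt : IntegrableOn (Sg.indicator fun _ => c) (Ioc T (K * T)) volume :=
    (integrableOn_const measure_Ioc_lt_top.ne (by simp)).indicator hSgmeas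
  have hIndII : IntervalIntegrable (Sg.indicator fun _ => c) volume T (K * T) :=
    (intervalIntegrable_iff_integrableOn_Ioc_of_le hTKT').2 hIndInt
  have hIndVal : (∫ t in T..(K*T), Sg.indicator (fun _ => c) t)
      = c * (volume (Sg ∩ Ioc T (K * T))).toReal := by
    rw [intervalIntegral.integral_of_le hTKT', MeasureTheory.integral_indicator hSgmeas,
      setIntegral_const, measureReal_def, Measure.restrict_apply hSgmeas, smul_eq_mul, mul_comm]
  -- FTC for log ∘ F
  have hT₁le : ∀ x ∈ Icc T (K * T), T₁ ≤ x := fun x hx => le_trans hTT₁ hx.1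
  have hFxpos : ∀ x ∈ Icc T (K * T), 0 < F x := fun x hx => hFpos x (hT₁le x hx)
  have huIcc : uIcc T (K * T) = Icc T (K * T) := uIcc_of_le hTKT'
  have hcontOn : ContinuousOn (fun x => h₁ x / F x) (Icc T (K * T)) :=
    hcont₁.continuousOn.div hFcont.continuousOn (fun x hx => (hFxpos x hx).ne')
  have hII : IntervalIntegrable (fun x => h₁ x / F x) volume T (K * T) :=
    ContinuousOn.intervalIntegrable (by rw [huIcc]; exact hcontOn)
  have hftc : (∫ x in T..(K*T), h₁ x / F x) = Real.log (F (K * T)) - Real.log (F T) := by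
    apply intervalIntegral.integral_eq_sub_of_hasDerivAt
      (f := fun x => Real.log (F x)) (f' := fun x => h₁ x / F x) _ hII
    intro x hx
    rw [huIcc] at hx
    exact (hFderiv x).log (hFxpos x hx).ne'
  -- upper bound for the integral
  have hup : Real.log (F (K * T)) - Real.log (F T) ≤ Real.log K + Real.log (M₁ / C) := by
    have h1 : Real.log (F (K * T)) ≤ Real.log (M₁ * (K * T)) :=
      (Real.log_le_log_iff (hFxpos _ ⟨hTKT', le_rfl⟩) (by positivity)).2
        (hFup _ hKT0.le)
    have h2 : Real.log (C * T) ≤ Real.log (F T) :=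
      (Real.log_le_log_iff (by positivity) (hFxpos _ ⟨le_rfl, hTKT'⟩)).2
        (hFlow T hTT₁)
    have e1 : Real.log (M₁ * (K * T)) = Real.log M₁ + Real.log K + Real.log T := by
      rw [Real.log_mul hM₁0.ne' (by positivity), Real.log_mul hK0.ne' hT0.ne']; ring
    have e2 : Real.log (C * T) = Real.log C + Real.log T := Real.log_mul hC.ne' hT0.ne'
    have e3 : Real.log (M₁ / C) = Real.log M₁ - Real.log C := Real.log_div hM₁0.ne' hC.ne'
    linarith
  -- lower bound: pointwise comparison
  have hIIone : IntervalIntegrable (fun x => (1 + δ) / x) volume T (K * T) := by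
    apply ContinuousOn.intervalIntegrable
    rw [huIcc]
    exact continuousOn_const.div continuousOn_id
      (fun x hx => (lt_of_lt_of_le hT0 hx.1).ne')
  have hIIsub : IntervalIntegrable (fun x => (1 + δ) / x - Sg.indicator (fun _ => c) x)
      volume T (K * T) := hIIone.sub hIndII
  have hptwise : ∀ x ∈ Icc T (K * T),
      (1 + δ) / x - Sg.indicator (fun _ => c) x ≤ h₁ x / F x := by
    intro x hx
    have hx0 : 0 < x := lt_of_lt_of_le hT0 hx.1
    by_cases hxS : x ∈ Sg
    · rw [indicator_of_mem hxS]
      have h1 : (1 + δ) / x ≤ c := by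
        rw [hcdef]
        exact div_le_div_of_nonneg_left hδ1.le hT0 hx.1
      have h2 : 0 ≤ h₁ x / F x := div_nonneg (hpos₁ x hx0.le).le (hFxpos x hx).le
      linarith
    · rw [indicator_of_notMem hxS, sub_zero]
      have hxS' : (1 + δ) * F x < x * h₁ x := not_le.1 hxS
      rw [div_le_div_iff₀ hx0 (hFxpos x hx)]
      nlinarith
  have hlowint : (∫ x in T..(K*T), ((1 + δ) / x - Sg.indicator (fun _ => c) x))
      ≤ ∫ x in T..(K*T), h₁ x / F x :=
    intervalIntegral.integral_mono_on hTKT' hIIsub hII hptwise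
  -- compute the left integral
  have hintone : (∫ x in T..(K*T), (1 + δ) / x) = (1 + δ) * Real.log K := by
    have : (fun x : ℝ => (1 + δ) / x) = fun x => (1 + δ) * (1 / x) := by
      funext x; ring
    rw [this, intervalIntegral.integral_const_mul, integral_one_div ?_]
    · congr 1
      rw [mul_div_assoc, div_self hT0.ne', mul_one]
    · rw [huIcc]
      rintro ⟨h0, -⟩
      exact absurd h0 (not_le.2 hT0)
  have hsplit : (∫ x in T..(K*T), ((1 + δ) / x - Sg.indicator (fun _ => c) x))
      = (1 + δ) * Real.log K - c * (volume (Sg ∩ Ioc T (K * T))).toReal := by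
    rw [intervalIntegral.integral_sub hIIone hIndII, hintone, hIndVal]
  -- final contradiction
  have hcvol : c * (volume (Sg ∩ Ioc T (K * T))).toReal < 1 := by
    have := mul_lt_mul_of_pos_left hvol hc0
    calc c * (volume (Sg ∩ Ioc T (K * T))).toReal < c * (T / (1 + δ)) := this
      _ = 1 := by rw [hcdef]; field_simp
  rw [hsplit, hftc] at hlowint
  have hexp : (1 + δ) * Real.log K = Real.log K + δ * Real.log K := by ring
  linarith

/-- Subsequence extraction lemma (Lemma 4.4): for positive continuous bounded
`h₁, h₂` on `[0,∞)` with Cesàro mean of `h₁` bounded below and Cesàro mean of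
`h₂` tending to `0`, there is a sequence `tₙ → ∞` along which
`m₁ (tₙ) ≥ h₁ (tₙ) / (1+δ)` and `h₂ (tₙ) → 0`. -/
theorem subsequence_lemma
    (h₁ h₂ : ℝ → ℝ)
    (hpos₁ : ∀ s, 0 ≤ s → 0 < h₁ s) (hpos₂ : ∀ s, 0 ≤ s → 0 < h₂ s)
    (hcont₁ : Continuous h₁) (hcont₂ : Continuous h₂)
    (hbdd₁ : ∃ M, ∀ s, 0 ≤ s → h₁ s ≤ M) (hbdd₂ : ∃ M, ∀ s, 0 ≤ s → h₂ s ≤ M)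
    (m₁ m₂ : ℝ → ℝ)
    (hm₁ : ∀ t, m₁ t = (1 / t) * ∫ s in (0:ℝ)..t, h₁ s)
    (hm₂ : ∀ t, m₂ t = (1 / t) * ∫ s in (0:ℝ)..t, h₂ s)
    (C : ℝ) (hC : 0 < C) (hlow : ∀ᶠ t in atTop, C ≤ m₁ t)
    (hto0 : Tendsto m₂ atTop (nhds 0))
    (δ : ℝ) (hδ : 0 < δ) :
    ∃ t : ℕ → ℝ, Tendsto t atTop atTop ∧
      (∀ n, (1 / (1 + δ)) * h₁ (t n) ≤ m₁ (t n)) ∧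
      Tendsto (fun n => h₂ (t n)) atTop (nhds 0) := by
  obtain ⟨M₁, hM₁⟩ := hbdd₁
  obtain ⟨T₀, hT₀'⟩ := eventually_atTop.1 hlow
  have hT₀ : ∀ t, T₀ ≤ t → C ≤ (1 / t) * ∫ s in (0:ℝ)..t, h₁ s := by
    intro t ht; rw [← hm₁ t]; exact hT₀' t ht
  have hto0' : Tendsto (fun t => (1 / t) * ∫ s in (0:ℝ)..t, h₂ s) atTop (nhds 0) :=
    hto0.congr fun t => hm₂ t
  have key : ∀ n : ℕ, ∃ t : ℝ, (n:ℝ) ≤ t ∧ 1 ≤ t ∧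
      t * h₁ t ≤ (1 + δ) * (∫ s in (0:ℝ)..t, h₁ s) ∧ h₂ t < 1 / ((n:ℝ) + 1) :=
    fun n => exists_good_point h₁ h₂ hpos₁ hpos₂ hcont₁ hcont₂ M₁ hM₁ C hC T₀ hT₀
      hto0' δ hδ (1 / ((n:ℝ) + 1)) (by positivity) (n:ℝ)
  choose t ht using key
  have hδ1 : (0:ℝ) < 1 + δ := by linarith
  refine ⟨t, ?_, ?_, ?_⟩
  · exact tendsto_atTop_mono (fun n => (ht n).1) tendsto_natCast_atTop_atTop
  · intro n
    have h1 : (1:ℝ) ≤ t n := (ht n).2.1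
    have ht0 : (0:ℝ) < t n := lt_of_lt_of_le one_pos h1
    have h3 := (ht n).2.2.1
    rw [hm₁]
    rw [div_mul_eq_mul_div, div_mul_eq_mul_div, one_mul, one_mul,
      div_le_div_iff₀ hδ1 ht0]
    nlinarith [h3]
  · apply squeeze_zero (fun n => (hpos₂ _ (by linarith [(ht n).2.1])).le)
      (fun n => ((ht n).2.2.2).le)
    exact tendsto_one_div_add_atTop_nhds_zero_nat
end

section
/- Let $h : [0,\infty) \to \mathbb{R}$ be positive, continuous and bounded, let $m(t) = \frac{1}{t}\int_0^t h(s)\,ds$, and suppose there is $C>0$ with $m(t) \geq C$ for all sufficiently large $t$. Fix $\delta > 0$ and define $S_T = \{ t \in [0,T] : m(t) < \frac{1}{1+\delta} h(t) \}$. Then $\liminf_{T \to \infty} \frac{\mu(S_T)}{T} < 1$, where $\mu$ denotes Lebesgue measure. -/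
open MeasureTheory Filter

lemma bad_set_density_lt_one_aux (d l a L : ℝ) (hd : 0 < d) (hl : 0 < l) (ha : 0 < a) :
    (d / (l * a)) * ((1 - (d * (l - 1) / l - L) / (2 * d)) * (l * a) - a)
      = L + (d * (l - 1) / l - L) / 2 := by
  field_simp
  ring

/-- Density claim (eq. (4.41)): if the Cesàro mean `m` of a positive continuous
bounded `h` is eventually bounded below by `C > 0`, then the "bad" set
`S_T = {t ∈ [0,T] : m t < h t / (1+δ)}` cannot have asymptotically full
density in `[0,T]`. -/
theorem bad_set_density_lt_one
    (h : ℝ → ℝ)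
    (hpos : ∀ s, 0 ≤ s → 0 < h s)
    (hcont : Continuous h)
    (hbdd : ∃ M, ∀ s, 0 ≤ s → h s ≤ M)
    (m : ℝ → ℝ)
    (hm : ∀ t, m t = (1 / t) * ∫ s in (0:ℝ)..t, h s)
    (C : ℝ) (hC : 0 < C) (hlow : ∀ᶠ t in atTop, C ≤ m t)
    (δ : ℝ) (hδ : 0 < δ) :
    Filter.liminf
      (fun T =>
        (volume {t : ℝ | t ∈ Set.Icc (0:ℝ) T ∧ m t < (1 / (1 + δ)) * h t}).toReal / T)
      atTop < 1 := by
  by_contra hcon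
  push_neg at hcon
  obtain ⟨M, hM⟩ := hbdd
  have hM0 : 0 < M := lt_of_lt_of_le (hpos 0 le_rfl) (hM 0 le_rfl)
  have hδ0 : (0:ℝ) < 1 + δ := by linarith
  set F : ℝ → ℝ := fun t => ∫ s in (0:ℝ)..t, h s with hFdef
  have hFderiv : ∀ t : ℝ, HasDerivAt F (h t) t := fun t =>
    intervalIntegral.integral_hasDerivAt_right (hcont.intervalIntegrable _ _)
      (hcont.stronglyMeasurableAtFilter _ _) hcont.continuousAt
  have hFcont : Continuous F := by
    exact continuous_iff_continuousAt.2 fun t => (hFderiv t).continuousAt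
  have hFpos : ∀ t : ℝ, 0 < t → 0 < F t := by
    intro t ht
    exact intervalIntegral.intervalIntegral_pos_of_pos_on
      (hcont.intervalIntegrable _ _) (fun x hx => hpos x (le_of_lt hx.1)) ht
  have hFle : ∀ t : ℝ, 0 ≤ t → F t ≤ M * t := by
    intro t ht
    have : F t ≤ ∫ s in (0:ℝ)..t, M := by
      apply intervalIntegral.integral_mono_on ht (hcont.intervalIntegrable _ _)
        (intervalIntegrable_const)
      intro x hx; exact hM x hx.1
    have h2 : (∫ s in (0:ℝ)..t, (M:ℝ)) = M * t := by simp [mul_comm]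
    exact this.trans_eq h2
  set S : Set ℝ := {t | m t < (1 / (1 + δ)) * h t} with hSdef
  have hmeasS : MeasurableSet S := by
    have hmm : Measurable m := by
      have : m = fun t => (1 / t) * F t := funext hm
      rw [this]
      exact (measurable_const.div measurable_id).mul hFcont.measurable
    exact measurableSet_lt hmm (hcont.measurable.const_mul _)
  -- constants
  set l : ℝ := 1 + min δ 1 with hldef
  have hl1 : 1 < l := by have := lt_min hδ one_pos; simp [hldef]; positivity
  have hl0 : 0 < l := by linarith
  have hlδ : l ≤ 1 + δ := by simp [hldef]
  set c : ℝ := (1 + δ) * (l - 1) / l - Real.log l with hcdef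
  have hc : 0 < c := by
    have hlog : Real.log l < l - 1 := Real.log_lt_sub_one_of_pos hl0 (by linarith)
    have : l - 1 ≤ (1 + δ) * (l - 1) / l := by
      rw [le_div_iff₀ hl0]
      nlinarith [min_le_right δ 1]
    simp only [hcdef]; linarith
  set α : ℝ := 1 - c / (2 * (1 + δ)) with hαdef
  have hα1 : α < 1 := by
    have : 0 < c / (2 * (1 + δ)) := by positivity
    simp only [hαdef]; linarith
  -- eventual density bound
  have hbd : IsBoundedUnder (· ≥ ·) atTop
      (fun T => (volume {t : ℝ | t ∈ Set.Icc (0:ℝ) T ∧ m t < (1 / (1 + δ)) * h t}).toReal / T) := by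
    refine ⟨0, ?_⟩
    rw [eventually_map]
    filter_upwards [eventually_gt_atTop (0:ℝ)] with T hT
    positivity
  have hev : ∀ᶠ T in atTop,
      α < (volume {t : ℝ | t ∈ Set.Icc (0:ℝ) T ∧ m t < (1 / (1 + δ)) * h t}).toReal / T :=
    eventually_lt_of_lt_liminf (lt_of_lt_of_le hα1 hcon) hbd
  obtain ⟨T₁, hT₁⟩ := eventually_atTop.1 hev
  set T₀ : ℝ := max T₁ 1 with hT₀def
  have hT₀pos : (0:ℝ) < T₀ := lt_of_lt_of_le one_pos (le_max_right _ _)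
  have hdens : ∀ T, T₀ ≤ T → α * T ≤ (volume (Set.Icc (0:ℝ) T ∩ S)).toReal := by
    intro T hT
    have hTpos : 0 < T := lt_of_lt_of_le hT₀pos hT
    have heq : {t : ℝ | t ∈ Set.Icc (0:ℝ) T ∧ m t < (1 / (1 + δ)) * h t}
        = Set.Icc (0:ℝ) T ∩ S := rfl
    have := hT₁ T (le_trans (le_max_left _ _) hT)
    rw [heq, lt_div_iff₀ hTpos] at this
    linarith
  -- key block estimate
  have key : ∀ a, T₀ ≤ a →
      Real.log l + c / 2 ≤ Real.log (F (l * a)) - Real.log (F a) := by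
    intro a ha
    have ha0 : 0 < a := lt_of_lt_of_le hT₀pos ha
    have hala : a ≤ l * a := by nlinarith
    have hla0 : 0 < l * a := by positivity
    -- FTC for log ∘ F on [a, l*a]
    have hsub : Set.uIcc a (l * a) ⊆ Set.Ioi (0:ℝ) := by
      rw [Set.uIcc_of_le hala]
      exact fun x hx => lt_of_lt_of_le ha0 hx.1
    have hFTC : Real.log (F (l * a)) - Real.log (F a)
        = ∫ t in a..(l * a), h t / F t := by
      rw [← intervalIntegral.integral_eq_sub_of_hasDerivAt
        (f := fun t => Real.log (F t)) (f' := fun t => h t / F t)]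
      · intro x hx
        have hx0 : 0 < x := hsub hx
        have := (Real.hasDerivAt_log (ne_of_gt (hFpos x hx0))).comp x (hFderiv x)
        simpa [div_eq_inv_mul, Function.comp_def] using this
      · apply ContinuousOn.intervalIntegrable
        apply ContinuousOn.div (hcont.continuousOn) (hFcont.continuousOn)
        intro x hx; exact ne_of_gt (hFpos x (hsub hx))
    -- integrability of indicator
    have hgcont : ContinuousOn (fun t : ℝ => (1 + δ) / t) (Set.uIcc a (l * a)) := by
      apply ContinuousOn.div continuousOn_const continuousOn_id
      intro x hx; exact ne_of_gt (hsub hx)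
    have hgint : IntervalIntegrable (fun t : ℝ => (1 + δ) / t) volume a (l * a) :=
      hgcont.intervalIntegrable
    have hindint : IntervalIntegrable (S.indicator fun t : ℝ => (1 + δ) / t) volume a (l * a) := by
      rw [intervalIntegrable_iff_integrableOn_Ioc_of_le hala] at hgint ⊢
      exact hgint.indicator hmeasS
    -- pointwise bound
    have hptwise : ∀ x ∈ Set.Icc a (l * a),
        S.indicator (fun t : ℝ => (1 + δ) / t) x ≤ h x / F x := by
      intro x hx
      have hx0 : 0 < x := lt_of_lt_of_le ha0 hx.1
      have hFx : 0 < F x := hFpos x hx0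
      by_cases hxS : x ∈ S
      · rw [Set.indicator_of_mem hxS]
        have hmx : m x < (1 / (1 + δ)) * h x := hxS
        rw [hm x] at hmx
        rw [one_div_mul_eq_div, one_div_mul_eq_div] at hmx
        rw [div_lt_div_iff₀ hx0 hδ0] at hmx
        rw [div_le_div_iff₀ hx0 hFx]
        nlinarith [hmx]
      · rw [Set.indicator_of_notMem hxS]
        exact div_nonneg (hpos x hx0.le).le hFx.le
    have hmono : ∫ t in a..(l * a), S.indicator (fun t : ℝ => (1 + δ) / t) t
        ≤ ∫ t in a..(l * a), h t / F t := by
      have hdivint : IntervalIntegrable (fun t => h t / F t) volume a (l * a) := by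
        apply ContinuousOn.intervalIntegrable
        apply ContinuousOn.div hcont.continuousOn hFcont.continuousOn
        intro x hx; exact ne_of_gt (hFpos x (hsub hx))
      exact intervalIntegral.integral_mono_on hala hindint hdivint hptwise
    -- compute indicator integral as set integral
    have hset : ∫ t in a..(l * a), S.indicator (fun t : ℝ => (1 + δ) / t) t
        = ∫ t in (Set.Ioc a (l * a) ∩ S), (1 + δ) / t := by
      rw [intervalIntegral.integral_of_le hala, setIntegral_indicator hmeasS]
    -- lower bound on the set integral
    have hμfin : volume (Set.Ioc a (l * a) ∩ S) ≠ ⊤ := by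
      apply ne_of_lt
      apply lt_of_le_of_lt (measure_mono Set.inter_subset_left)
      simp [Real.volume_Ioc]
    have hconstle : ((1 + δ) / (l * a)) * (volume (Set.Ioc a (l * a) ∩ S)).toReal
        ≤ ∫ t in (Set.Ioc a (l * a) ∩ S), (1 + δ) / t := by
      rw [mul_comm ((1 + δ) / (l * a)), ← smul_eq_mul]
      apply setIntegral_ge_of_const_le ((measurableSet_Ioc).inter hmeasS) hμfin
      · intro x hx
        have hx1 : a < x := hx.1.1
        have hx2 : x ≤ l * a := hx.1.2
        apply div_le_div_of_nonneg_left (by linarith) (by linarith) hx2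
      · have hIcc : IntegrableOn (fun t : ℝ => (1 + δ) / t) (Set.Icc a (l * a)) volume := by
          apply ContinuousOn.integrableOn_Icc
          apply ContinuousOn.div continuousOn_const continuousOn_id
          intro x hx; exact ne_of_gt (lt_of_lt_of_le ha0 hx.1)
        exact (hIcc.mono_set Set.Ioc_subset_Icc_self).mono_set Set.inter_subset_left
    -- measure lower bound
    have hmeaslb : α * (l * a) - a ≤ (volume (Set.Ioc a (l * a) ∩ S)).toReal := by
      have hsub2 : Set.Icc (0:ℝ) (l * a) ∩ S ⊆ (Set.Ioc a (l * a) ∩ S) ∪ Set.Icc 0 a := by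
        rintro x ⟨⟨hx0, hxla⟩, hxS⟩
        by_cases hxa : x ≤ a
        · exact Or.inr ⟨hx0, hxa⟩
        · exact Or.inl ⟨⟨lt_of_not_ge hxa, hxla⟩, hxS⟩
      have h1 : volume (Set.Icc (0:ℝ) (l * a) ∩ S)
          ≤ volume (Set.Ioc a (l * a) ∩ S) + ENNReal.ofReal a := by
        apply le_trans (measure_mono hsub2)
        apply le_trans (measure_union_le _ _)
        simp [Real.volume_Icc]
      have h2 : (volume (Set.Icc (0:ℝ) (l * a) ∩ S)).toReal
          ≤ (volume (Set.Ioc a (l * a) ∩ S)).toReal + a := by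
        have := ENNReal.toReal_mono (by
          exact ENNReal.add_ne_top.2 ⟨hμfin, ENNReal.ofReal_ne_top⟩) h1
        rwa [ENNReal.toReal_add hμfin ENNReal.ofReal_ne_top,
          ENNReal.toReal_ofReal (le_of_lt ha0)] at this
      have h3 := hdens (l * a) (le_trans ha hala)
      linarith
    -- combine
    have hcoef : 0 < (1 + δ) / (l * a) := by positivity
    have hchain : ((1 + δ) / (l * a)) * (α * (l * a) - a)
        ≤ Real.log (F (l * a)) - Real.log (F a) := by
      rw [hFTC]
      calc ((1 + δ) / (l * a)) * (α * (l * a) - a)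
          ≤ ((1 + δ) / (l * a)) * (volume (Set.Ioc a (l * a) ∩ S)).toReal :=
            mul_le_mul_of_nonneg_left hmeaslb (le_of_lt hcoef)
        _ ≤ ∫ t in (Set.Ioc a (l * a) ∩ S), (1 + δ) / t := hconstle
        _ = ∫ t in a..(l * a), S.indicator (fun t : ℝ => (1 + δ) / t) t := hset.symm
        _ ≤ ∫ t in a..(l * a), h t / F t := hmono
    have halg : ((1 + δ) / (l * a)) * (α * (l * a) - a) = Real.log l + c / 2 := by
      rw [hαdef, hcdef]
      exact bad_set_density_lt_one_aux (1 + δ) l a (Real.log l) hδ0 hl0 ha0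
    linarith [halg ▸ hchain]
  -- iterate the block estimate
  have grow : ∀ n : ℕ, Real.log (F T₀) + n * (Real.log l + c / 2)
      ≤ Real.log (F (l ^ n * T₀)) := by
    intro n
    induction n with
    | zero => simp
    | succ n ih =>
      have hln : (1:ℝ) ≤ l ^ n := one_le_pow₀ (le_of_lt hl1)
      have hstep := key (l ^ n * T₀) (by nlinarith)
      have heq : l * (l ^ n * T₀) = l ^ (n + 1) * T₀ := by ring
      rw [heq] at hstep
      push_cast
      linarith
  -- upper bound and contradiction
  have hFT₀ : 0 < F T₀ := hFpos _ hT₀pos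
  obtain ⟨n, hn⟩ := exists_nat_gt ((Real.log M + Real.log T₀ - Real.log (F T₀)) / (c / 2))
  have hln : (1:ℝ) ≤ l ^ n := one_le_pow₀ (le_of_lt hl1)
  have hup : Real.log (F (l ^ n * T₀)) ≤ Real.log M + n * Real.log l + Real.log T₀ := by
    have h1 : F (l ^ n * T₀) ≤ M * (l ^ n * T₀) := hFle _ (by positivity)
    have h2 : Real.log (F (l ^ n * T₀)) ≤ Real.log (M * (l ^ n * T₀)) :=
      Real.log_le_log (hFpos _ (by positivity)) h1
    rw [Real.log_mul (ne_of_gt hM0) (by positivity),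
      Real.log_mul (by positivity) (ne_of_gt hT₀pos), Real.log_pow] at h2
    push_cast at h2
    linarith
  have hgrow := grow n
  rw [div_lt_iff₀ (half_pos hc)] at hn
  have hexp : (n:ℝ) * (Real.log l + c / 2) = (n:ℝ) * Real.log l + (n:ℝ) * (c / 2) := by ring
  linarith [hgrow, hup, hn, hexp]
end
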